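/- Let (I_1,…,I_r), (I'_1,…,I'_r), (J_1,…,J_q), (J'_1,…,J'_q) be sequences of weakly increasing tuples with entries in {1,…,n}, with |I_k| = |I'_k| and |J_k| = |J'_k|, and suppose the exponent matrices of the diagonal monomials coincide: for all i, j ∈ {1,…,n}, ∑_k #{l : the l-th entry of I_k is i and the l-th entry of I'_k is j} = ∑_k #{l : the l-th entry of J_k is i and the l-th entry of J'_k is j}. Then for every totally positive n×n matrix A, (1/(|J_1|!⋯|J_q|!))·∏_{k=1}^q per(A_{J_k,J'_k}) ≤ ∏_{k=1}^r per(A_{I_k,I'_k}) ≤ |I_1|!⋯|I_r|!·∏_{k=1}^q per(A_{J_k,J'_k}). -/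

import Mathlib

open Matrix BigOperators

/-- The permanent of a square real matrix. -/
def per {r : ℕ} (B : Matrix (Fin r) (Fin r) ℝ) : ℝ :=
  ∑ σ : Equiv.Perm (Fin r), ∏ i, B i (σ i)

/-- An `n × n` real matrix is totally positive if all its minors are positive. -/
def TotallyPos {n : ℕ} (A : Matrix (Fin n) (Fin n) ℝ) : Prop :=
  ∀ (k : ℕ) (f g : Fin k → Fin n), StrictMono f → StrictMono g →
    0 < (A.submatrix f g).det

lemma TP.entry_pos {n : ℕ} {A : Matrix (Fin n) (Fin n) ℝ} (hA : TotallyPos A)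
    (i j : Fin n) : 0 < A i j := by
  have h := hA 1 (fun _ => i) (fun _ => j) (Subsingleton.strictMono _) (Subsingleton.strictMono _)
  simpa [Matrix.det_fin_one] using h

lemma TP.two {n : ℕ} {A : Matrix (Fin n) (Fin n) ℝ} (hA : TotallyPos A)
    {i i' j j' : Fin n} (h1 : i ≤ i') (h2 : j ≤ j') :
    A i j' * A i' j ≤ A i j * A i' j' := by
  rcases eq_or_lt_of_le h1 with rfl | h1
  · rw [mul_comm]
  rcases eq_or_lt_of_le h2 with rfl | h2
  · exact le_refl _
  have hm : StrictMono (![i, i'] : Fin 2 → Fin n) := by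
    intro a b hab
    fin_cases a <;> fin_cases b <;> simp_all
  have hm' : StrictMono (![j, j'] : Fin 2 → Fin n) := by
    intro a b hab
    fin_cases a <;> fin_cases b <;> simp_all
  have h := hA 2 ![i, i'] ![j, j'] hm hm'
  rw [Matrix.det_fin_two] at h
  simp only [Matrix.submatrix_apply] at h
  simp only [Matrix.cons_val_zero, Matrix.cons_val_one, Matrix.head_cons] at h
  linarith

lemma TP.prod_le_diag {n : ℕ} {A : Matrix (Fin n) (Fin n) ℝ} (hA : TotallyPos A) :
    ∀ (m : ℕ) (M O : Fin m → Fin n), Monotone M → Monotone O →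
      ∀ σ : Equiv.Perm (Fin m),
        ∏ i, A (M i) (O (σ i)) ≤ ∏ i, A (M i) (O i) := by
  intro m
  induction m with
  | zero => intro M O _ _ σ; simp
  | succ m ih =>
    intro M O hM hO σ
    set j : Fin (m + 1) := σ⁻¹ 0 with hj
    set σ' : Equiv.Perm (Fin (m + 1)) := σ * Equiv.swap 0 j with hσ'
    have hσ'0 : σ' 0 = 0 := by
      simp [hσ', hj, Equiv.swap_apply_left]
    have hσj : σ j = 0 := by simp [hj]
    have step2 : ∏ i, A (M i) (O (σ' i)) ≤ ∏ i, A (M i) (O i) := by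
      set pq := Equiv.Perm.decomposeFin σ' with hpq
      have hback : Equiv.Perm.decomposeFin.symm pq = σ' := by simp [hpq]
      have hp : pq.1 = 0 := by
        conv_lhs => rw [← Equiv.Perm.decomposeFin_symm_apply_zero pq.1 pq.2]
        rw [Prod.mk.eta, hback, hσ'0]
      have hsucc : ∀ x : Fin m, σ' x.succ = (pq.2 x).succ := by
        intro x
        rw [← hback, ← Prod.mk.eta (p := pq), Equiv.Perm.decomposeFin_symm_apply_succ,
          hp, Equiv.swap_self]
        rfl
      rw [Fin.prod_univ_succ, Fin.prod_univ_succ, hσ'0]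
      have hrest := ih (fun x => M x.succ) (fun x => O x.succ)
        (hM.comp (Fin.strictMono_succ.monotone)) (hO.comp (Fin.strictMono_succ.monotone)) pq.2
      have heq : ∏ x : Fin m, A (M x.succ) (O (σ' x.succ))
          = ∏ x : Fin m, A (M x.succ) (O ((pq.2 x).succ)) :=
        Finset.prod_congr rfl fun x _ => by rw [hsucc]
      rw [heq]
      exact mul_le_mul_of_nonneg_left hrest (le_of_lt (TP.entry_pos hA _ _))
    have step1 : ∏ i, A (M i) (O (σ i)) ≤ ∏ i, A (M i) (O (σ' i)) := by
      by_cases hj0 : j = 0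
      · rw [hσ', hj0, Equiv.swap_self]
        simp
      set f : Fin (m + 1) → ℝ := fun i => A (M i) (O (σ i)) with hf
      set g : Fin (m + 1) → ℝ := fun i => A (M i) (O (σ' i)) with hg
      have hfg : ∀ i, i ≠ 0 → i ≠ j → f i = g i := by
        intro i h0 hjj
        simp only [hf, hg, hσ', Equiv.Perm.coe_mul, Function.comp_apply,
          Equiv.swap_apply_of_ne_of_ne h0 hjj]
      have hmem : j ∈ (Finset.univ.erase (0 : Fin (m + 1))) :=
        Finset.mem_erase.2 ⟨hj0, Finset.mem_univ _⟩
      have hsplitf : ∏ i, f i = f 0 * (f j * ∏ i ∈ (Finset.univ.erase 0).erase j, f i) := by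
        rw [Finset.mul_prod_erase _ f hmem, Finset.mul_prod_erase _ f (Finset.mem_univ 0)]
      have hsplitg : ∏ i, g i = g 0 * (g j * ∏ i ∈ (Finset.univ.erase 0).erase j, g i) := by
        rw [Finset.mul_prod_erase _ g hmem, Finset.mul_prod_erase _ g (Finset.mem_univ 0)]
      have hRested : ∏ i ∈ (Finset.univ.erase 0).erase j, f i
          = ∏ i ∈ (Finset.univ.erase 0).erase j, g i := by
        refine Finset.prod_congr rfl fun i hi => ?_
        have hi' := Finset.mem_erase.1 hi
        have hi'' := Finset.mem_erase.1 hi'.2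
        exact hfg i hi''.1 hi'.1
      have hkey : f 0 * f j ≤ g 0 * g j := by
        have hfj : f j = A (M j) (O 0) := by simp [hf, hσj]
        have hgj : g j = A (M j) (O (σ 0)) := by
          simp [hg, hσ', Equiv.swap_apply_right]
        have hg0 : g 0 = A (M 0) (O 0) := by simp [hg, hσ'0]
        rw [hfj, hgj, hg0]
        exact TP.two hA (hM (Fin.zero_le j)) (hO (Fin.zero_le (σ 0)))
      have hRnn : 0 ≤ ∏ i ∈ (Finset.univ.erase 0).erase j, f i :=
        Finset.prod_nonneg fun i _ => le_of_lt (TP.entry_pos hA _ _)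
      calc ∏ i, f i = (f 0 * f j) * ∏ i ∈ (Finset.univ.erase 0).erase j, f i := by
            rw [hsplitf]; ring
        _ ≤ (g 0 * g j) * ∏ i ∈ (Finset.univ.erase 0).erase j, f i :=
            mul_le_mul_of_nonneg_right hkey hRnn
        _ = ∏ i, g i := by rw [hsplitg, hRested]; ring
    exact le_trans step1 step2

lemma TP.diag_le_per {n m : ℕ} {A : Matrix (Fin n) (Fin n) ℝ} (hA : TotallyPos A)
    (M O : Fin m → Fin n) :
    ∏ i, A (M i) (O i) ≤ per (A.submatrix M O) := by
  have h : ∏ i, A (M i) (O i) = ∏ i, (A.submatrix M O) i ((1 : Equiv.Perm (Fin m)) i) := by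
    simp
  rw [h]
  exact Finset.single_le_sum
    (f := fun σ : Equiv.Perm (Fin m) => ∏ i, (A.submatrix M O) i (σ i))
    (fun σ _ => Finset.prod_nonneg fun i _ => le_of_lt (TP.entry_pos hA _ _))
    (Finset.mem_univ _)

lemma TP.per_le_fact_diag {n m : ℕ} {A : Matrix (Fin n) (Fin n) ℝ} (hA : TotallyPos A)
    (M O : Fin m → Fin n) (hM : Monotone M) (hO : Monotone O) :
    per (A.submatrix M O) ≤ (Nat.factorial m : ℝ) * ∏ i, A (M i) (O i) := by
  have h := Finset.sum_le_card_nsmul Finset.univ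
    (fun σ : Equiv.Perm (Fin m) => ∏ i, (A.submatrix M O) i (σ i))
    (∏ i, A (M i) (O i))
    (fun σ _ => by
      simpa [Matrix.submatrix_apply] using TP.prod_le_diag hA m M O hM hO σ)
  rw [Finset.card_univ, Fintype.card_perm, Fintype.card_fin] at h
  simpa [nsmul_eq_mul, per] using h

lemma diag_prod_eq_pow {n m : ℕ} (A : Matrix (Fin n) (Fin n) ℝ) (M O : Fin m → Fin n) :
    ∏ i, A (M i) (O i)
      = ∏ p : Fin n × Fin n, A p.1 p.2 ^
          (Finset.univ.filter fun l => M l = p.1 ∧ O l = p.2).card := by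
  rw [← Finset.prod_fiberwise Finset.univ (fun l => (M l, O l))
    (fun l => A (M l) (O l))]
  refine Finset.prod_congr rfl fun p _ => ?_
  have hset : (Finset.univ.filter fun l => (M l, O l) = p)
      = (Finset.univ.filter fun l => M l = p.1 ∧ O l = p.2) := by
    refine Finset.filter_congr fun l _ => ?_
    simp [Prod.ext_iff]
  rw [hset]
  calc ∏ l ∈ (Finset.univ.filter fun l => M l = p.1 ∧ O l = p.2), A (M l) (O l)
      = ∏ _l ∈ (Finset.univ.filter fun l => M l = p.1 ∧ O l = p.2), A p.1 p.2 :=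
        Finset.prod_congr rfl fun l hl => by
          have h := (Finset.mem_filter.1 hl).2
          rw [h.1, h.2]
    _ = _ := Finset.prod_const _

theorem stmt6 (n r q : ℕ) (lI : Fin r → ℕ) (lJ : Fin q → ℕ)
    (I I' : (k : Fin r) → Fin (lI k) → Fin n)
    (J J' : (k : Fin q) → Fin (lJ k) → Fin n)
    (hI : ∀ k, Monotone (I k)) (hI' : ∀ k, Monotone (I' k))
    (hJ : ∀ k, Monotone (J k)) (hJ' : ∀ k, Monotone (J' k))
    (hCD : ∀ i j : Fin n,
      (∑ k, (Finset.univ.filter fun l => I k l = i ∧ I' k l = j).card) =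
        ∑ k, (Finset.univ.filter fun l => J k l = i ∧ J' k l = j).card) :
    ∀ A : Matrix (Fin n) (Fin n) ℝ, TotallyPos A →
      ((∏ k, (Nat.factorial (lJ k) : ℝ))⁻¹ * ∏ k, per (A.submatrix (J k) (J' k))) ≤
          (∏ k, per (A.submatrix (I k) (I' k))) ∧
      (∏ k, per (A.submatrix (I k) (I' k))) ≤
        (∏ k, (Nat.factorial (lI k) : ℝ)) * ∏ k, per (A.submatrix (J k) (J' k)) := by
  intro A hA
  set DI : ℝ := ∏ k, ∏ l, A (I k l) (I' k l) with hDI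
  set DJ : ℝ := ∏ k, ∏ l, A (J k l) (J' k l) with hDJ
  set PI : ℝ := ∏ k, per (A.submatrix (I k) (I' k)) with hPI
  set PJ : ℝ := ∏ k, per (A.submatrix (J k) (J' k)) with hPJ
  set fI : ℝ := ∏ k, (Nat.factorial (lI k) : ℝ) with hfI
  set fJ : ℝ := ∏ k, (Nat.factorial (lJ k) : ℝ) with hfJ
  have hDIJ : DI = DJ := by
    rw [hDI, hDJ]
    have e1 : ∀ k, ∏ l, A (I k l) (I' k l)
        = ∏ p : Fin n × Fin n, A p.1 p.2 ^
            (Finset.univ.filter fun l => I k l = p.1 ∧ I' k l = p.2).card :=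
      fun k => diag_prod_eq_pow A (I k) (I' k)
    have e2 : ∀ k, ∏ l, A (J k l) (J' k l)
        = ∏ p : Fin n × Fin n, A p.1 p.2 ^
            (Finset.univ.filter fun l => J k l = p.1 ∧ J' k l = p.2).card :=
      fun k => diag_prod_eq_pow A (J k) (J' k)
    rw [Finset.prod_congr rfl fun k _ => e1 k, Finset.prod_congr rfl fun k _ => e2 k,
      Finset.prod_comm, Finset.prod_comm (s := Finset.univ (α := Fin q))]
    refine Finset.prod_congr rfl fun p _ => ?_
    rw [Finset.prod_pow_eq_pow_sum, Finset.prod_pow_eq_pow_sum, hCD p.1 p.2]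
  have hDJpos : 0 < DJ :=
    Finset.prod_pos fun k _ => Finset.prod_pos fun l _ => TP.entry_pos hA _ _
  have hIlow : DI ≤ PI :=
    Finset.prod_le_prod
      (fun k _ => Finset.prod_nonneg fun l _ => le_of_lt (TP.entry_pos hA _ _))
      (fun k _ => TP.diag_le_per hA (I k) (I' k))
  have hJlow : DJ ≤ PJ :=
    Finset.prod_le_prod
      (fun k _ => Finset.prod_nonneg fun l _ => le_of_lt (TP.entry_pos hA _ _))
      (fun k _ => TP.diag_le_per hA (J k) (J' k))
  have hIup : PI ≤ fI * DI := by
    rw [hfI, hDI, hPI, ← Finset.prod_mul_distrib]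
    exact Finset.prod_le_prod
      (fun k _ => le_trans (Finset.prod_nonneg fun l _ => le_of_lt (TP.entry_pos hA _ _))
        (TP.diag_le_per hA (I k) (I' k)))
      (fun k _ => TP.per_le_fact_diag hA (I k) (I' k) (hI k) (hI' k))
  have hJup : PJ ≤ fJ * DJ := by
    rw [hfJ, hDJ, hPJ, ← Finset.prod_mul_distrib]
    exact Finset.prod_le_prod
      (fun k _ => le_trans (Finset.prod_nonneg fun l _ => le_of_lt (TP.entry_pos hA _ _))
        (TP.diag_le_per hA (J k) (J' k)))
      (fun k _ => TP.per_le_fact_diag hA (J k) (J' k) (hJ k) (hJ' k))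
  have hfJpos : 0 < fJ :=
    Finset.prod_pos fun k _ => by exact_mod_cast Nat.factorial_pos (lJ k)
  have hfIpos : 0 < fI :=
    Finset.prod_pos fun k _ => by exact_mod_cast Nat.factorial_pos (lI k)
  constructor
  · rw [inv_mul_le_iff₀ hfJpos]
    calc PJ ≤ fJ * DJ := hJup
      _ = fJ * DI := by rw [hDIJ]
      _ ≤ fJ * PI := mul_le_mul_of_nonneg_left hIlow (le_of_lt hfJpos)
  · calc PI ≤ fI * DI := hIup
      _ = fI * DJ := by rw [hDIJ]
      _ ≤ fI * PJ := mul_le_mul_of_nonneg_left hJlow (le_of_lt hfIpos)
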